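/- arXiv:2103.00770 — 3 statements merged into one kernel-verified Lean document; each statement's English description precedes it below -/
import Mathlib

section
/- Near-independence of parities: for a fixed integer b ≥ 1 and (log n)^2/n ≤ p ≤ 1 - (log n)^2/n, the probability that vertices 1,...,b all have odd degree in G(n,p) differs from the product of the individual probabilities by at most D/n^{q+1} for some constant D = D(b,q) and all sufficiently large n. -/
open MeasureTheory

/-- Bernoulli(p) measure on `Bool`. -/
noncomputable def bern (p : ℝ) : Measure Bool :=
  (Real.toNNReal p) • Measure.dirac true + (Real.toNNReal (1 - p)) • Measure.dirac false

instance (p : ℝ) : IsFiniteMeasure (bern p) := by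
  unfold bern; infer_instance

/-- The Erdős–Rényi measure: each potential edge (element of `Sym2 (Fin n)`)
is present (`true`) independently with probability `p`. -/
noncomputable def erMeasure (n : ℕ) (p : ℝ) : Measure (Sym2 (Fin n) → Bool) :=
  Measure.pi fun _ => bern p

/-- The random graph determined by the sample point `ω`. -/
def erGraph (n : ℕ) (ω : Sym2 (Fin n) → Bool) : SimpleGraph (Fin n) :=
  SimpleGraph.fromEdgeSet {e | ω e = true}

/-- Degree of a vertex. -/
noncomputable def degN {V : Type*} (G : SimpleGraph V) (v : V) : ℕ :=
  Nat.card (G.neighborSet v)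

/-- Number of odd-degree vertices. -/
noncomputable def oddCount (n : ℕ) (ω : Sym2 (Fin n) → Bool) : ℕ :=
  Nat.card {v : Fin n // Odd (degN (erGraph n ω) v)}

namespace NI
open Finset

noncomputable def w (p : ℝ) (x : Bool) : ℝ := if x then p else 1 - p

noncomputable def f (n : ℕ) (p : ℝ) (ω : Sym2 (Fin n) → Bool) : ℝ :=
  ∏ e : Sym2 (Fin n), w p (ω e)

def h (x : Bool) : ℝ := if x then -1 else 1

instance (n : ℕ) (p : ℝ) : IsFiniteMeasure (erMeasure n p) := by
  unfold erMeasure; infer_instance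

lemma bern_singleton (p : ℝ) (hp0 : 0 ≤ p) (hp1 : p ≤ 1) (x : Bool) :
    ((bern p) {x}).toReal = w p x := by
  cases x <;>
  · simp [bern, w, Measure.dirac_apply' _ (measurableSet_singleton _)]
    simp [Set.indicator, ENNReal.smul_def, smul_eq_mul, Real.coe_toNNReal, hp0, hp1, sub_nonneg.2 hp1]

lemma meas_singleton (n : ℕ) (p : ℝ) (hp0 : 0 ≤ p) (hp1 : p ≤ 1)
    (ω : Sym2 (Fin n) → Bool) :
    ((erMeasure n p) {ω}).toReal = f n p ω := by
  rw [erMeasure, ← Set.univ_pi_singleton ω, Measure.pi_pi, ENNReal.toReal_prod, f]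
  exact Finset.prod_congr rfl fun e _ => bern_singleton p hp0 hp1 (ω e)

lemma meas_eq_sum (n : ℕ) (p : ℝ) (hp0 : 0 ≤ p) (hp1 : p ≤ 1)
    (A : Set (Sym2 (Fin n) → Bool)) [DecidablePred (· ∈ A)] :
    ((erMeasure n p) A).toReal
      = ∑ ω ∈ Finset.univ.filter (· ∈ A), f n p ω := by
  have hA : A = ⋃ ω ∈ (Finset.univ.filter (· ∈ A) : Finset _), {ω} := by
    ext ω; simp
  have h2 : (erMeasure n p) A = ∑ ω ∈ Finset.univ.filter (· ∈ A), (erMeasure n p) {ω} := by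
    conv_lhs => rw [hA]
    refine measure_biUnion_finset ?_ ?_
    · intro x _ y _ hxy
      simp [Set.disjoint_singleton, hxy]
    · intro ω _; exact measurableSet_singleton ω
  rw [h2, ENNReal.toReal_sum (fun ω _ => measure_ne_top _ _)]
  exact Finset.sum_congr rfl fun ω _ => meas_singleton n p hp0 hp1 ω

lemma deg_eq (n : ℕ) (ω : Sym2 (Fin n) → Bool) (i : Fin n) :
    degN (erGraph n ω) i
      = ((Finset.univ.erase i).filter (fun j => ω s(i, j) = true)).card := by
  classical
  rw [degN, Nat.card_eq_card_toFinset _]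
  congr 1
  ext j
  rw [Set.mem_toFinset]
  simp only [Set.mem_toFinset, SimpleGraph.mem_neighborSet, erGraph,
    SimpleGraph.fromEdgeSet_adj, Set.mem_setOf_eq, Finset.mem_filter,
    Finset.mem_erase, Finset.mem_univ, and_true, true_and]
  constructor
  · rintro ⟨hω, hne⟩; exact ⟨Ne.symm hne, hω⟩
  · rintro ⟨hne, hω⟩; exact ⟨hω, Ne.symm hne⟩

lemma sgn_eq (n : ℕ) (ω : Sym2 (Fin n) → Bool) (i : Fin n) :
    (-1 : ℝ) ^ (degN (erGraph n ω) i)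
      = ∏ j ∈ Finset.univ.erase i, h (ω s(i, j)) := by
  classical
  rw [deg_eq]
  have : ∀ j, h (ω s(i,j)) = if ω s(i,j) = true then (-1:ℝ) else 1 := by
    intro j; cases hx : ω s(i,j) <;> simp [h, hx]
  simp only [this]
  rw [Finset.prod_ite, Finset.prod_const, Finset.prod_const, one_pow, mul_one]

lemma sum_f_mul (n : ℕ) (p : ℝ) (g : Sym2 (Fin n) → Bool → ℝ) :
    ∑ ω : Sym2 (Fin n) → Bool, ∏ e, (w p (ω e) * g e (ω e))
      = ∏ e : Sym2 (Fin n), (w p true * g e true + w p false * g e false) := by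
  classical
  have := Finset.prod_univ_sum (ι := Sym2 (Fin n))
    (fun _ => (Finset.univ : Finset Bool)) (fun e x => w p x * g e x)
  rw [Fintype.piFinset_univ] at this
  rw [← this]
  exact Finset.prod_congr rfl fun e _ => by simp [Fintype.sum_bool]

lemma sum_f_one (n : ℕ) (p : ℝ) : ∑ ω : Sym2 (Fin n) → Bool, f n p ω = 1 := by
  have := sum_f_mul n p (fun _ _ => 1)
  simpa [f, w] using this

def pairs (n : ℕ) (S : Finset (Fin n)) : Finset (Fin n × Fin n) :=
  (S ×ˢ Finset.univ).filter (fun q => q.2 ≠ q.1)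

noncomputable def cnt (n : ℕ) (S : Finset (Fin n)) (e : Sym2 (Fin n)) : ℕ :=
  ((pairs n S).filter (fun q => s(q.1, q.2) = e)).card

noncomputable def ES (n : ℕ) (S : Finset (Fin n)) : Finset (Sym2 (Fin n)) :=
  Finset.univ.filter (fun e => Odd (cnt n S e))

lemma prod_sgn_pairs (n : ℕ) (S : Finset (Fin n)) (ω : Sym2 (Fin n) → Bool) :
    ∏ i ∈ S, ∏ j ∈ Finset.univ.erase i, h (ω s(i, j))
      = ∏ q ∈ pairs n S, h (ω s(q.1, q.2)) := by
  classical
  rw [pairs, Finset.prod_filter, Finset.prod_product]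
  refine Finset.prod_congr rfl fun i _ => ?_
  rw [← Finset.prod_filter, Finset.filter_ne']

lemma prod_pairs_edges (n : ℕ) (S : Finset (Fin n)) (ω : Sym2 (Fin n) → Bool) :
    ∏ q ∈ pairs n S, h (ω s(q.1, q.2))
      = ∏ e : Sym2 (Fin n), (if e ∈ ES n S then h (ω e) else 1) := by
  classical
  have hmaps : ∀ q ∈ pairs n S, s(q.1, q.2) ∈ (Finset.univ : Finset (Sym2 (Fin n))) :=
    fun q _ => Finset.mem_univ _
  rw [← Finset.prod_fiberwise_of_maps_to hmaps (fun q => h (ω s(q.1, q.2)))]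
  refine Finset.prod_congr rfl fun e _ => ?_
  have : ∏ q ∈ (pairs n S).filter (fun q => s(q.1, q.2) = e), h (ω s(q.1, q.2))
      = h (ω e) ^ (cnt n S e) := by
    rw [cnt, ← Finset.prod_const]
    exact Finset.prod_congr rfl fun q hq => by
      rw [(Finset.mem_filter.1 hq).2]
  rw [this]
  simp only [ES, Finset.mem_filter, Finset.mem_univ, true_and]
  rcases Nat.even_or_odd (cnt n S e) with hev | hod
  · rw [if_neg (by simpa [Nat.odd_iff, Nat.even_iff] using hev)]
    cases hx : ω e <;> simp [h, hev.neg_one_pow]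
  · rw [if_pos hod]
    cases hx : ω e <;> simp [h, hod.neg_one_pow]

lemma ES_eq_image (n : ℕ) (S : Finset (Fin n)) :
    ES n S = (S ×ˢ Sᶜ).image (fun q => s(q.1, q.2)) := by
  classical
  ext e
  induction e using Sym2.ind with
  | _ a b =>
    simp only [ES, Finset.mem_filter, Finset.mem_univ, true_and, Finset.mem_image,
      Finset.mem_product, Finset.mem_compl, Prod.exists]
    by_cases hab : a = b
    · subst hab
      have h0 : cnt n S s(a, a) = 0 := by
        rw [cnt, Finset.card_eq_zero]
        ext ⟨q1, q2⟩
        simp only [Finset.mem_filter, pairs, Finset.mem_product, Finset.mem_univ,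
          and_true, Finset.notMem_empty, iff_false, not_and]
        rintro ⟨h1, h2⟩ h3
        rw [Sym2.eq_iff] at h3
        rcases h3 with ⟨rfl, rfl⟩ | ⟨rfl, rfl⟩ <;> exact h2 rfl
      rw [h0]
      simp only [Nat.odd_iff, Nat.zero_mod]
      constructor
      · intro hc; exact absurd hc (by norm_num)
      rintro ⟨i, j, ⟨hi, hj⟩, hij⟩
      rw [Sym2.eq_iff] at hij
      rcases hij with ⟨rfl, rfl⟩ | ⟨rfl, rfl⟩ <;> exact absurd hi hj
    · have hset : (pairs n S).filter (fun q => s(q.1, q.2) = s(a, b))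
          = (if a ∈ S then {(a, b)} else ∅) ∪ (if b ∈ S then {(b, a)} else ∅) := by
        ext ⟨q1, q2⟩
        simp only [Finset.mem_filter, pairs, Finset.mem_product, Finset.mem_univ, and_true]
        constructor
        · rintro ⟨⟨h1, h2⟩, h3⟩
          rw [Sym2.eq_iff] at h3
          rcases h3 with ⟨rfl, rfl⟩ | ⟨rfl, rfl⟩
          · simp [Finset.mem_union, h1, Prod.ext_iff]
          · simp [Finset.mem_union, h1, Prod.ext_iff]
        · intro hq
          rw [Finset.mem_union] at hq
          rcases hq with hq | hq
          · by_cases ha : a ∈ S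
            · rw [if_pos ha, Finset.mem_singleton] at hq
              obtain ⟨rfl, rfl⟩ := Prod.mk.injEq .. ▸ hq
              exact ⟨⟨ha, fun hh => hab hh.symm⟩, rfl⟩
            · rw [if_neg ha] at hq; exact absurd hq (Finset.notMem_empty _)
          · by_cases hbS : b ∈ S
            · rw [if_pos hbS, Finset.mem_singleton] at hq
              obtain ⟨rfl, rfl⟩ := Prod.mk.injEq .. ▸ hq
              exact ⟨⟨hbS, hab⟩, Sym2.eq_swap⟩
            · rw [if_neg hbS] at hq; exact absurd hq (Finset.notMem_empty _)
      have hcnt : cnt n S s(a, b)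
          = (if a ∈ S then 1 else 0) + (if b ∈ S then 1 else 0) := by
        rw [cnt, hset]
        have hd : Disjoint (if a ∈ S then ({(a, b)} : Finset (Fin n × Fin n)) else ∅)
            (if b ∈ S then {(b, a)} else ∅) := by
          split_ifs <;> simp [Finset.disjoint_singleton, Prod.ext_iff, hab]
        rw [Finset.card_union_of_disjoint hd]
        congr 1 <;> split_ifs <;> simp
      rw [hcnt]
      constructor
      · intro hodd
        by_cases ha : a ∈ S <;> by_cases hbS : b ∈ S <;>
          simp [ha, hbS, Nat.odd_iff] at hodd ⊢
        · exact ⟨a, b, ⟨ha, hbS⟩, Or.inl ⟨rfl, rfl⟩⟩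
        · exact ⟨b, a, ⟨hbS, ha⟩, Or.inr ⟨rfl, rfl⟩⟩
      · rintro ⟨i, j, ⟨hi, hj⟩, hij⟩
        rw [Sym2.eq_iff] at hij
        rcases hij with ⟨rfl, rfl⟩ | ⟨rfl, rfl⟩ <;>
          simp [hi, hj, Nat.odd_iff]

lemma card_ES (n : ℕ) (S : Finset (Fin n)) :
    (ES n S).card = S.card * (n - S.card) := by
  classical
  rw [ES_eq_image, Finset.card_image_of_injOn, Finset.card_product, Finset.card_compl,
    Fintype.card_fin]
  rintro ⟨i, j⟩ hq ⟨i', j'⟩ hq' hee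
  simp only [Finset.coe_product, Set.mem_prod, Finset.mem_coe, Finset.mem_compl] at hq hq'
  simp only [Sym2.eq_iff] at hee
  rcases hee with ⟨rfl, rfl⟩ | ⟨rfl, rfl⟩
  · rfl
  · exact absurd hq.1 hq'.2

lemma expectation (n : ℕ) (p : ℝ) (S : Finset (Fin n)) :
    ∑ ω : Sym2 (Fin n) → Bool, f n p ω * ∏ i ∈ S, (-1:ℝ) ^ (degN (erGraph n ω) i)
      = (1 - 2*p) ^ (S.card * (n - S.card)) := by
  classical
  have key : ∀ ω : Sym2 (Fin n) → Bool,
      f n p ω * ∏ i ∈ S, (-1:ℝ)^(degN (erGraph n ω) i)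
      = ∏ e, (w p (ω e) * (if e ∈ ES n S then h (ω e) else 1)) := by
    intro ω
    rw [Finset.prod_mul_distrib, ← prod_pairs_edges, ← prod_sgn_pairs, f]
    congr 1
    exact Finset.prod_congr rfl fun i _ => sgn_eq n ω i
  rw [Finset.sum_congr rfl (fun ω _ => key ω),
    sum_f_mul n p (fun e x => if e ∈ ES n S then h x else 1)]
  have he : ∀ e : Sym2 (Fin n),
      (w p true * (if e ∈ ES n S then h true else 1)
        + w p false * (if e ∈ ES n S then h false else 1))
        = if e ∈ ES n S then 1 - 2*p else 1 := by
    intro e; split_ifs <;> simp [w, h] <;> ring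
  rw [Finset.prod_congr rfl (fun e _ => he e), Finset.prod_ite_mem, Finset.univ_inter,
    Finset.prod_const, card_ES]

lemma expand {ι : Type*} [DecidableEq ι] (B : Finset ι) (x : ι → ℝ) :
    ∏ i ∈ B, ((1 - x i)/2)
      = ∑ t ∈ B.powerset, ((-1:ℝ)^t.card * ∏ i ∈ t, x i) * (1/2)^B.card := by
  have h1 : ∏ i ∈ B, ((1 - x i)/2) = (∏ i ∈ B, (-x i + 1)) * (1/2:ℝ)^B.card := by
    rw [← Finset.prod_const, ← Finset.prod_mul_distrib]
    exact Finset.prod_congr rfl fun i _ => by ring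
  rw [h1, Finset.prod_add, Finset.sum_mul]
  refine Finset.sum_congr rfl fun t ht => ?_
  have h2 : ∏ i ∈ t, (-x i) = (-1:ℝ)^t.card * ∏ i ∈ t, x i := by
    rw [← Finset.prod_const, ← Finset.prod_mul_distrib]
    exact Finset.prod_congr rfl fun i _ => by ring
  rw [Finset.prod_const_one, mul_one, h2]

end NI

namespace NI

lemma ite_odd (c : ℝ) (d : ℕ) :
    ((1 - (-1:ℝ)^d)/2) = if Odd d then 1 else 0 := by
  rcases Nat.even_or_odd d with he | ho
  · rw [he.neg_one_pow, if_neg (by simpa [Nat.even_iff, Nat.odd_iff] using he)]; ring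
  · rw [ho.neg_one_pow, if_pos ho]; ring

lemma P_one (n : ℕ) (p : ℝ) (hp0 : 0 ≤ p) (hp1 : p ≤ 1) (i : Fin n) :
    (erMeasure n p {ω | Odd (degN (erGraph n ω) i)}).toReal
      = (1 - (1 - 2*p)^(n-1))/2 := by
  classical
  rw [meas_eq_sum n p hp0 hp1, Finset.sum_filter]
  have step : ∀ ω : Sym2 (Fin n) → Bool,
      (if ω ∈ {ω | Odd (degN (erGraph n ω) i)} then f n p ω else 0)
        = (f n p ω - f n p ω * (-1:ℝ)^(degN (erGraph n ω) i)) * (1/2) := by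
    intro ω
    have : (f n p ω - f n p ω * (-1:ℝ)^(degN (erGraph n ω) i)) * (1/2)
        = f n p ω * ((1 - (-1:ℝ)^(degN (erGraph n ω) i))/2) := by ring
    rw [this, ite_odd (f n p ω)]
    simp only [Set.mem_setOf_eq]
    split_ifs <;> simp
  rw [Finset.sum_congr rfl (fun ω _ => step ω), ← Finset.sum_mul,
    Finset.sum_sub_distrib, sum_f_one]
  have := expectation n p {i}
  simp only [Finset.card_singleton, one_mul, Finset.prod_singleton] at this
  rw [this]
  ring

lemma card_B (n b : ℕ) (hbn : b ≤ n) :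
    (Finset.univ.filter (fun i : Fin n => (i : ℕ) < b)).card = b := by
  classical
  have : Finset.univ.filter (fun i : Fin n => (i : ℕ) < b)
      = Finset.univ.map (Fin.castLEEmb hbn) := by
    ext j
    simp only [Finset.mem_filter, Finset.mem_univ, true_and, Finset.mem_map,
      Fin.castLEEmb, Function.Embedding.coeFn_mk]
    constructor
    · intro hj; exact ⟨⟨(j : ℕ), hj⟩, by simp [Fin.castLE, Fin.ext_iff]⟩
    · rintro ⟨k, -, rfl⟩; simpa using k.isLt
  rw [this, Finset.card_map, Finset.card_univ, Fintype.card_fin]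

lemma P_all (n b : ℕ) (p : ℝ) (hp0 : 0 ≤ p) (hp1 : p ≤ 1) :
    (erMeasure n p {ω | ∀ i : Fin n, (i : ℕ) < b → Odd (degN (erGraph n ω) i)}).toReal
    = ∑ t ∈ (Finset.univ.filter (fun i : Fin n => (i : ℕ) < b)).powerset,
        ((-1:ℝ)^t.card * (1 - 2*p)^(t.card * (n - t.card)))
          * (1/2)^(Finset.univ.filter (fun i : Fin n => (i : ℕ) < b)).card := by
  classical
  set B := Finset.univ.filter (fun i : Fin n => (i : ℕ) < b) with hB
  rw [meas_eq_sum n p hp0 hp1, Finset.sum_filter]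
  have step : ∀ ω : Sym2 (Fin n) → Bool,
      (if ω ∈ {ω | ∀ i : Fin n, (i : ℕ) < b → Odd (degN (erGraph n ω) i)}
          then f n p ω else 0)
        = f n p ω * ∏ i ∈ B, ((1 - (-1:ℝ)^(degN (erGraph n ω) i))/2) := by
    intro ω
    have hfac := fun i => ite_odd (f n p ω) (degN (erGraph n ω) i)
    simp only [hfac]
    rw [Finset.prod_boole]
    simp only [Set.mem_setOf_eq]
    by_cases hev : ∀ i : Fin n, (i : ℕ) < b → Odd (degN (erGraph n ω) i)
    · rw [if_pos hev, if_pos, mul_one]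
      intro i hi
      exact hev i (Finset.mem_filter.1 hi).2
    · rw [if_neg hev, if_neg, mul_zero]
      intro hall
      exact hev fun i hi => hall i (Finset.mem_filter.2 ⟨Finset.mem_univ _, hi⟩)
  rw [Finset.sum_congr rfl (fun ω _ => step ω)]
  have step2 : ∀ ω : Sym2 (Fin n) → Bool,
      f n p ω * ∏ i ∈ B, ((1 - (-1:ℝ)^(degN (erGraph n ω) i))/2)
        = ∑ t ∈ B.powerset,
            ((-1:ℝ)^t.card * (1/2:ℝ)^B.card)
              * (f n p ω * ∏ i ∈ t, (-1:ℝ)^(degN (erGraph n ω) i)) := by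
    intro ω
    rw [expand B (fun i => (-1:ℝ)^(degN (erGraph n ω) i)), Finset.mul_sum]
    exact Finset.sum_congr rfl fun t ht => by ring
  rw [Finset.sum_congr rfl (fun ω _ => step2 ω), Finset.sum_comm]
  refine Finset.sum_congr rfl fun t ht => ?_
  rw [← Finset.mul_sum, expectation n p t]
  ring

end NI


/-- Near-independence of degree parities: for fixed `b ≥ 1`, the probability that
vertices `1,…,b` all have odd degree differs from the product of the individual
probabilities by at most `D/n^(q+1)` for all large `n`. -/
theorem near_independence (b : ℕ) (hb : 1 ≤ b) (q : ℝ) (hq : 0 < q) :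
    ∃ D : ℝ, 0 < D ∧ ∃ n0 : ℕ, ∀ n : ℕ, n0 ≤ n → ∀ p : ℝ,
      (Real.log n) ^ 2 / n ≤ p → p ≤ 1 - (Real.log n) ^ 2 / n →
      |(erMeasure n p {ω | ∀ i : Fin n, (i : ℕ) < b → Odd (degN (erGraph n ω) i)}).toReal
          - ∏ i ∈ Finset.univ.filter (fun i : Fin n => (i : ℕ) < b),
              (erMeasure n p {ω | Odd (degN (erGraph n ω) i)}).toReal|
        ≤ D / (n : ℝ) ^ (q + 1) := by
  classical
  refine ⟨2, by norm_num, max (2 * b) (⌈Real.exp ((q + 1) / 2)⌉₊ + 1), ?_⟩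
  intro n hn p hpl hpu
  have hn2b : 2 * b ≤ n := le_trans (le_max_left _ _) hn
  have hbn : b ≤ n := le_trans (by omega) hn2b
  have hn1 : 1 ≤ n := le_trans hb hbn
  have hn0R : (0 : ℝ) < n := by exact_mod_cast Nat.lt_of_lt_of_le Nat.zero_lt_one hn1
  have hceil : (⌈Real.exp ((q + 1) / 2)⌉₊ + 1 : ℕ) ≤ n := le_trans (le_max_right _ _) hn
  have hexp : Real.exp ((q + 1) / 2) ≤ n := by
    calc Real.exp ((q + 1) / 2) ≤ (⌈Real.exp ((q + 1) / 2)⌉₊ : ℝ) := Nat.le_ceil _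
    _ ≤ (n : ℝ) := by exact_mod_cast le_trans (Nat.le_succ _) hceil
  have hlog : (q + 1) / 2 ≤ Real.log n := (Real.le_log_iff_exp_le hn0R).2 hexp
  have hlog0 : 0 ≤ Real.log n := le_trans (by linarith) hlog
  set L : ℝ := (Real.log n) ^ 2 / n with hL
  have hL0 : 0 ≤ L := div_nonneg (sq_nonneg _) hn0R.le
  have hp0 : 0 ≤ p := le_trans hL0 hpl
  have hp1 : p ≤ 1 := le_trans hpu (by linarith)
  have h2L : 2 * L ≤ 1 := by linarith
  set B := Finset.univ.filter (fun i : Fin n => (i : ℕ) < b) with hBdef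
  have hcardB : B.card = b := NI.card_B n b hbn
  set ε : ℝ := 1 - 2 * p with hε
  have hεabs : |ε| ≤ 1 - 2 * L := abs_le.2 ⟨by simp only [hε]; linarith, by simp only [hε]; linarith⟩
  set m : ℕ := 2 * (n - b) with hm
  set M : ℝ := |ε| ^ m with hM
  have hM0 : 0 ≤ M := pow_nonneg (abs_nonneg _) _
  -- rewrite both probabilities
  rw [NI.P_all n b p hp0 hp1]
  have hprod : ∏ i ∈ B, (erMeasure n p {ω | Odd (degN (erGraph n ω) i)}).toReal
      = ∑ t ∈ B.powerset, ((-1:ℝ)^t.card * ε^((n-1) * t.card)) * (1/2:ℝ)^B.card := by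
    rw [Finset.prod_congr rfl (fun i _ => NI.P_one n p hp0 hp1 i)]
    have := NI.expand B (fun _ => ε^(n-1))
    rw [this]
    refine Finset.sum_congr rfl fun t ht => ?_
    rw [Finset.prod_const, ← pow_mul]
  rw [hprod, ← Finset.sum_sub_distrib]
  -- termwise bound
  have hterm : ∀ t ∈ B.powerset,
      |((-1:ℝ)^t.card * ε^(t.card * (n - t.card))) * (1/2:ℝ)^B.card
        - ((-1:ℝ)^t.card * ε^((n-1) * t.card)) * (1/2:ℝ)^B.card|
      ≤ (2 * M) * (1/2:ℝ)^B.card := by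
    intro t ht
    have htB : t ⊆ B := Finset.mem_powerset.1 ht
    have htc : t.card ≤ b := hcardB ▸ Finset.card_le_card htB
    have habs1 : |ε| ≤ 1 := by linarith
    have key : |ε^(t.card * (n - t.card)) - ε^((n-1) * t.card)| ≤ 2 * M := by
      rcases Nat.lt_or_ge t.card 2 with hlt | hge
      · have : t.card * (n - t.card) = (n - 1) * t.card := by
          interval_cases h : t.card <;> simp [Nat.mul_comm]
        rw [this, sub_self, abs_zero]; linarith
      · have h1 : |ε| ^ (t.card * (n - t.card)) ≤ M := by
          apply pow_le_pow_of_le_one (abs_nonneg _) habs1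
          calc m = 2 * (n - b) := hm
          _ ≤ t.card * (n - t.card) :=
            Nat.mul_le_mul hge (Nat.sub_le_sub_left htc n)
        have h2 : |ε| ^ ((n - 1) * t.card) ≤ M := by
          apply pow_le_pow_of_le_one (abs_nonneg _) habs1
          calc m = 2 * (n - b) := hm
          _ ≤ t.card * (n - 1) := by
            have h9 : n - b ≤ n - 1 := by omega
            exact Nat.mul_le_mul hge h9
          _ = (n - 1) * t.card := Nat.mul_comm _ _
        calc |ε^(t.card * (n - t.card)) - ε^((n-1) * t.card)|
            ≤ |ε^(t.card * (n - t.card))| + |ε^((n-1) * t.card)| := abs_sub _ _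
        _ = |ε| ^ (t.card * (n - t.card)) + |ε| ^ ((n-1) * t.card) := by
            rw [abs_pow, abs_pow]
        _ ≤ 2 * M := by linarith
    have heq : |((-1:ℝ)^t.card * ε^(t.card * (n - t.card))) * (1/2:ℝ)^B.card
        - ((-1:ℝ)^t.card * ε^((n-1) * t.card)) * (1/2:ℝ)^B.card|
        = |ε^(t.card * (n - t.card)) - ε^((n-1) * t.card)| * (1/2:ℝ)^B.card := by
      rw [show ((-1:ℝ)^t.card * ε^(t.card * (n - t.card))) * (1/2:ℝ)^B.card
          - ((-1:ℝ)^t.card * ε^((n-1) * t.card)) * (1/2:ℝ)^B.card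
          = ((-1:ℝ)^t.card * (ε^(t.card * (n - t.card)) - ε^((n-1) * t.card)))
              * (1/2:ℝ)^B.card from by ring,
        abs_mul, abs_mul, abs_pow, abs_neg, abs_one, one_pow, one_mul,
        abs_of_nonneg (by positivity : (0:ℝ) ≤ (1/2:ℝ)^B.card)]
    rw [heq]
    exact mul_le_mul_of_nonneg_right key (by positivity)
  have hsum : |∑ t ∈ B.powerset,
      (((-1:ℝ)^t.card * ε^(t.card * (n - t.card))) * (1/2:ℝ)^B.card
        - ((-1:ℝ)^t.card * ε^((n-1) * t.card)) * (1/2:ℝ)^B.card)| ≤ 2 * M := by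
    calc |∑ t ∈ B.powerset, _| ≤ ∑ t ∈ B.powerset,
        |((-1:ℝ)^t.card * ε^(t.card * (n - t.card))) * (1/2:ℝ)^B.card
          - ((-1:ℝ)^t.card * ε^((n-1) * t.card)) * (1/2:ℝ)^B.card| :=
        Finset.abs_sum_le_sum_abs _ _
    _ ≤ ∑ _t ∈ B.powerset, (2 * M) * (1/2:ℝ)^B.card := Finset.sum_le_sum hterm
    _ = (2:ℝ)^b * ((2 * M) * (1/2:ℝ)^b) := by
        rw [Finset.sum_const, Finset.card_powerset, hcardB, nsmul_eq_mul]
        push_cast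
        ring
    _ = 2 * M := by
        rw [div_pow, one_pow]
        field_simp
  refine le_trans hsum ?_
  -- analytic estimate
  have hmn : (n : ℝ) ≤ (m : ℝ) := by
    have : n ≤ 2 * (n - b) := by omega
    exact_mod_cast this
  have hstep1 : M ≤ (1 - 2*L) ^ m := pow_le_pow_left₀ (abs_nonneg _) hεabs m
  have hstep2 : (1 - 2*L) ^ m ≤ Real.exp (-(2*L)) ^ m := by
    apply pow_le_pow_left₀ (by linarith)
    linarith [Real.add_one_le_exp (-(2*L))]
  have hstep3 : Real.exp (-(2*L)) ^ m = Real.exp ((m : ℝ) * (-(2*L))) :=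
    (Real.exp_nat_mul _ m).symm
  have hstep4 : Real.exp ((m : ℝ) * (-(2*L))) ≤ Real.exp (-((q+1) * Real.log n)) := by
    apply Real.exp_le_exp.2
    have hLn : L * n = (Real.log n) ^ 2 := by
      rw [hL, div_mul_cancel₀ _ hn0R.ne']
    have h1 : 2 * (Real.log n) ^ 2 ≤ 2 * L * m := by
      calc 2 * (Real.log n) ^ 2 = 2 * (L * n) := by rw [hLn]
      _ ≤ 2 * (L * m) := by
          apply mul_le_mul_of_nonneg_left _ (by norm_num)
          exact mul_le_mul_of_nonneg_left hmn hL0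
      _ = 2 * L * m := by ring
    have h2 : (q+1) * Real.log n ≤ 2 * (Real.log n) ^ 2 := by
      nlinarith [hlog, hlog0]
    nlinarith
  have hstep5 : Real.exp (-((q+1) * Real.log n)) = ((n:ℝ) ^ (q+1))⁻¹ := by
    rw [show -((q+1) * Real.log (n:ℝ)) = Real.log (n:ℝ) * (-(q+1)) from by ring,
      ← Real.rpow_def_of_pos hn0R, Real.rpow_neg hn0R.le]
  have hMle : M ≤ ((n:ℝ)^(q+1))⁻¹ := by
    calc M ≤ (1 - 2*L)^m := hstep1
    _ ≤ Real.exp (-(2*L))^m := hstep2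
    _ = Real.exp ((m:ℝ) * (-(2*L))) := hstep3
    _ ≤ Real.exp (-((q+1) * Real.log n)) := hstep4
    _ = ((n:ℝ)^(q+1))⁻¹ := hstep5
  calc 2 * M ≤ 2 * ((n:ℝ) ^ (q+1))⁻¹ := by linarith
  _ = 2 / (n : ℝ) ^ (q+1) := by rw [div_eq_mul_inv]
end

section
/- In G(n,p), the probability that the connected component containing a fixed vertex i has exactly r vertices is at most C(n-1, r-1) · r^{r-2} · p^{r-1} · (1-p)^{r(n-r)}. -/
open MeasureTheory

section Aux

variable {n : ℕ}

/-- `f` is a good parent function on `V` toward root `i`. -/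
def goodOn (i : Fin n) (V : Finset (Fin n)) (f : Fin n → Fin n) : Prop :=
  ∀ v ∈ V, f v ∈ insert i V ∧ ∃ k, f^[k] v = i

open Classical in
noncomputable def dOf (i : Fin n) (f : Fin n → Fin n) (v : Fin n) : ℕ :=
  if h : ∃ k, f^[k] v = i then Nat.find h else 0

lemma dOf_spec {i : Fin n} {f : Fin n → Fin n} {v : Fin n} (h : ∃ k, f^[k] v = i) :
    f^[dOf i f v] v = i := by
  rw [dOf, dif_pos h]; exact Nat.find_spec h

lemma dOf_le {i : Fin n} {f : Fin n → Fin n} {v : Fin n} {k : ℕ} (h : f^[k] v = i) :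
    dOf i f v ≤ k := by
  rw [dOf, dif_pos ⟨k, h⟩]; exact Nat.find_le h

lemma dOf_pos {i : Fin n} {f : Fin n → Fin n} {v : Fin n} (hvi : v ≠ i)
    (h : ∃ k, f^[k] v = i) : 1 ≤ dOf i f v := by
  by_contra hc
  push_neg at hc
  interval_cases h : dOf i f v
  · have := dOf_spec (i := i) (f := f) (v := v) ‹_›
    rw [h] at this
    exact hvi this

lemma dOf_lt {i : Fin n} {V : Finset (Fin n)} {f : Fin n → Fin n}
    (hf : goodOn i V f) (hi : i ∉ V) {v w : Fin n} (hv : v ∈ V) (hw : w ∈ V)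
    (hfw : f w = v) : dOf i f v < dOf i f w := by
  have hEw : ∃ k, f^[k] w = i := (hf w hw).2
  have hwi : w ≠ i := fun h => hi (h ▸ hw)
  have h1 : 1 ≤ dOf i f w := dOf_pos hwi hEw
  have hsp : f^[dOf i f w] w = i := dOf_spec hEw
  have : f^[dOf i f w - 1] v = i := by
    have : f^[dOf i f w - 1 + 1] w = i := by rwa [Nat.sub_add_cancel h1]
    rwa [Function.iterate_succ_apply, hfw] at this
  have := dOf_le this
  omega

def leaves (V : Finset (Fin n)) (f : Fin n → Fin n) : Finset (Fin n) :=
  V.filter fun v => ∀ w ∈ V, f w ≠ v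

lemma leaves_nonempty {i : Fin n} {V : Finset (Fin n)} {f : Fin n → Fin n}
    (hi : i ∉ V) (hV : V.Nonempty) (hf : goodOn i V f) : (leaves V f).Nonempty := by
  obtain ⟨v, hv, hmax⟩ := Finset.exists_max_image V (dOf i f) hV
  refine ⟨v, Finset.mem_filter.2 ⟨hv, fun w hw hfw => ?_⟩⟩
  have := dOf_lt hf hi hv hw hfw
  have := hmax w hw
  omega

lemma goodOn_erase {i : Fin n} {V : Finset (Fin n)} {f : Fin n → Fin n}
    (hf : goodOn i V f) {v : Fin n} (hv : v ∈ leaves V f) :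
    goodOn i (V.erase v) f := by
  intro w hw
  have hwV : w ∈ V := Finset.mem_of_mem_erase hw
  obtain ⟨h1, h2⟩ := hf w hwV
  refine ⟨?_, h2⟩
  rcases Finset.mem_insert.1 h1 with h | h
  · exact Finset.mem_insert.2 (Or.inl h)
  · refine Finset.mem_insert.2 (Or.inr (Finset.mem_erase.2 ⟨?_, h⟩))
    exact (Finset.mem_filter.1 hv).2 w hwV

def encodeAux : ℕ → Finset (Fin n) → (Fin n → Fin n) → List (Fin n)
  | 0, _, _ => []
  | k+1, V, f =>
    if h : (leaves V f).Nonempty then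
      f ((leaves V f).max' h) :: encodeAux k (V.erase ((leaves V f).max' h)) f
    else []

lemma max'_leaves_mem {V : Finset (Fin n)} {f : Fin n → Fin n} (h : (leaves V f).Nonempty) :
    (leaves V f).max' h ∈ V :=
  Finset.mem_of_mem_filter _ ((leaves V f).max'_mem h)

lemma encodeAux_length {i : Fin n} : ∀ (k : ℕ) (V : Finset (Fin n)) (f : Fin n → Fin n),
    i ∉ V → goodOn i V f → V.card = k → (encodeAux k V f).length = k := by
  intro k
  induction k with
  | zero => intro V f _ _ _; rfl
  | succ k ih =>
    intro V f hi hf hcard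
    have hV : V.Nonempty := Finset.card_pos.1 (by omega)
    have h := leaves_nonempty hi hV hf
    set v := (leaves V f).max' h with hv
    have hvV : v ∈ V := max'_leaves_mem h
    rw [encodeAux, dif_pos h]
    simp only [List.length_cons]
    rw [ih (V.erase v) f (fun hc => hi (Finset.mem_of_mem_erase hc))
      (goodOn_erase hf ((leaves V f).max'_mem h))
      (by rw [Finset.card_erase_of_mem hvV]; omega)]

lemma encodeAux_mem {i : Fin n} : ∀ (k : ℕ) (V : Finset (Fin n)) (f : Fin n → Fin n),
    i ∉ V → goodOn i V f → V.card = k →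
    ∀ u ∈ encodeAux k V f, ∃ w ∈ V, f w = u := by
  intro k
  induction k with
  | zero => intro V f _ _ _ u hu; exact absurd hu (List.not_mem_nil (a := u))
  | succ k ih =>
    intro V f hi hf hcard u hu
    have hV : V.Nonempty := Finset.card_pos.1 (by omega)
    have h := leaves_nonempty hi hV hf
    set v := (leaves V f).max' h with hv
    have hvV : v ∈ V := max'_leaves_mem h
    rw [encodeAux, dif_pos h] at hu
    rcases List.mem_cons.1 hu with h1 | h1
    · exact ⟨v, hvV, h1.symm⟩
    · obtain ⟨w, hw, hfw⟩ := ih (V.erase v) f (fun hc => hi (Finset.mem_of_mem_erase hc))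
        (goodOn_erase hf ((leaves V f).max'_mem h))
        (by rw [Finset.card_erase_of_mem hvV]; omega) u h1
      exact ⟨w, Finset.mem_of_mem_erase hw, hfw⟩

lemma encodeAux_mem' {i : Fin n} : ∀ (k : ℕ) (V : Finset (Fin n)) (f : Fin n → Fin n),
    i ∉ V → goodOn i V f → V.card = k →
    ∀ u ∈ V, ∀ w ∈ V, f w = u → u ∈ encodeAux k V f := by
  intro k
  induction k with
  | zero =>
    intro V f _ _ hcard u hu _ _ _
    rw [Finset.card_eq_zero.1 hcard] at hu
    exact absurd hu (Finset.notMem_empty u)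
  | succ k ih =>
    intro V f hi hf hcard u hu w hw hfw
    have hV : V.Nonempty := Finset.card_pos.1 (by omega)
    have h := leaves_nonempty hi hV hf
    set v := (leaves V f).max' h with hv
    have hvV : v ∈ V := max'_leaves_mem h
    rw [encodeAux, dif_pos h]
    by_cases hwv : w = v
    · exact List.mem_cons.2 (Or.inl (by rw [← hfw, hwv]))
    · refine List.mem_cons.2 (Or.inr ?_)
      have huv : u ≠ v := by
        intro hc
        exact (Finset.mem_filter.1 ((leaves V f).max'_mem h)).2 w hw (by rw [hfw, hc])
      exact ih (V.erase v) f (fun hc => hi (Finset.mem_of_mem_erase hc))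
        (goodOn_erase hf ((leaves V f).max'_mem h))
        (by rw [Finset.card_erase_of_mem hvV]; omega) u (Finset.mem_erase.2 ⟨huv, hu⟩)
        w (Finset.mem_erase.2 ⟨hwv, hw⟩) hfw

lemma encodeAux_last {i : Fin n} : ∀ (k : ℕ) (V : Finset (Fin n)) (f : Fin n → Fin n),
    i ∉ V → goodOn i V f → V.card = k →
    (encodeAux k V f).getLast? = if k = 0 then none else some i := by
  intro k
  induction k with
  | zero => intro V f _ _ _; rfl
  | succ k ih =>
    intro V f hi hf hcard
    have hV : V.Nonempty := Finset.card_pos.1 (by omega)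
    have h := leaves_nonempty hi hV hf
    set v := (leaves V f).max' h with hv
    have hvV : v ∈ V := max'_leaves_mem h
    have hi' : i ∉ V.erase v := fun hc => hi (Finset.mem_of_mem_erase hc)
    have hg' : goodOn i (V.erase v) f := goodOn_erase hf ((leaves V f).max'_mem h)
    have hc' : (V.erase v).card = k := by rw [Finset.card_erase_of_mem hvV]; omega
    rw [encodeAux, dif_pos h]
    rcases Nat.eq_zero_or_pos k with hk | hk
    · -- V = {v}, f v = i
      subst hk
      have hVe : V.erase v = ∅ := Finset.card_eq_zero.1 hc'
      have hfv : f v = i := by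
        obtain ⟨h1, h2⟩ := hf v hvV
        rcases Finset.mem_insert.1 h1 with h1 | h1
        · exact h1
        · exfalso
          have hfvv : f v = v := by
            have : V = {v} := by
              apply Finset.eq_singleton_iff_unique_mem.2
              exact ⟨hvV, fun w hw => by
                by_contra hwv
                exact (Finset.notMem_empty w) (hVe ▸ Finset.mem_erase.2 ⟨hwv, hw⟩)⟩
            rw [this] at h1; exact Finset.mem_singleton.1 h1
          obtain ⟨m, hm⟩ := h2
          have : f^[m] v = v := by
            clear hm
            induction m with
            | zero => rfl
            | succ m ihm => rw [Function.iterate_succ_apply, hfvv, ihm]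
          rw [hm] at this
          exact hi (this ▸ hvV)
      have : encodeAux 0 (V.erase v) f = ([] : List (Fin n)) := rfl
      rw [← hv]; simp [this, hfv]
    · have := ih (V.erase v) f hi' hg' hc'
      rw [if_neg (by omega)] at this
      have hlen := encodeAux_length k (V.erase v) f hi' hg' hc'
      cases htail : encodeAux k (V.erase v) f with
      | nil => rw [htail] at hlen; simp at hlen; omega
      | cons b l =>
        rw [htail] at this
        rw [List.getLast?_cons_cons, this, if_neg (by omega)]

lemma encodeAux_inj {i : Fin n} : ∀ (k : ℕ) (V : Finset (Fin n)) (f g : Fin n → Fin n),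
    i ∉ V → goodOn i V f → goodOn i V g → V.card = k →
    encodeAux k V f = encodeAux k V g → ∀ v ∈ V, f v = g v := by
  intro k
  induction k with
  | zero =>
    intro V f g _ _ _ hcard _ v hv
    rw [Finset.card_eq_zero.1 hcard] at hv
    exact absurd hv (Finset.notMem_empty v)
  | succ k ih =>
    intro V f g hi hf hg hcard heq v hv
    have hV : V.Nonempty := Finset.card_pos.1 (by omega)
    have hlf := leaves_nonempty hi hV hf
    have hlg := leaves_nonempty hi hV hg
    -- leaves V f = leaves V g
    have hls : leaves V f = leaves V g := by
      apply Finset.ext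
      intro u
      simp only [leaves, Finset.mem_filter]
      constructor
      · rintro ⟨huV, hu⟩
        refine ⟨huV, fun w hw hgw => ?_⟩
        have : u ∈ encodeAux (k+1) V g := encodeAux_mem' (k+1) V g hi hg hcard u huV w hw hgw
        rw [← heq] at this
        obtain ⟨w', hw', hfw'⟩ := encodeAux_mem (k+1) V f hi hf hcard u this
        exact hu w' hw' hfw'
      · rintro ⟨huV, hu⟩
        refine ⟨huV, fun w hw hfw => ?_⟩
        have : u ∈ encodeAux (k+1) V f := encodeAux_mem' (k+1) V f hi hf hcard u huV w hw hfw
        rw [heq] at this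
        obtain ⟨w', hw', hgw'⟩ := encodeAux_mem (k+1) V g hi hg hcard u this
        exact hu w' hw' hgw'
    have hmax : (leaves V f).max' hlf = (leaves V g).max' hlg := by
      congr 1
    set w := (leaves V f).max' hlf with hw
    have hwV : w ∈ V := max'_leaves_mem hlf
    rw [encodeAux, dif_pos hlf] at heq
    conv at heq => rw [encodeAux]
    rw [dif_pos hlg] at heq
    have hmaxg : (leaves V g).max' hlg = w := hmax.symm
    rw [hmaxg] at heq
    have hhead : f w = g w := (List.cons.injEq _ _ _ _ ▸ heq).1
    have htail : encodeAux k (V.erase w) f = encodeAux k (V.erase w) g :=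
      (List.cons.injEq _ _ _ _ ▸ heq).2
    by_cases hvw : v = w
    · rw [hvw]; exact hhead
    · exact ih (V.erase w) f g (fun hc => hi (Finset.mem_of_mem_erase hc))
        (goodOn_erase hf ((leaves V f).max'_mem hlf))
        (goodOn_erase hg (hls ▸ (leaves V f).max'_mem hlf))
        (by rw [Finset.card_erase_of_mem hwV]; omega) htail v (Finset.mem_erase.2 ⟨hvw, hv⟩)

open Classical in
noncomputable def goodF (i : Fin n) (V : Finset (Fin n)) : Finset (Fin n → Fin n) :=
  Finset.univ.filter (fun f => (∀ v, v ∉ V → f v = v) ∧ goodOn i V f)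

lemma mem_goodF {i : Fin n} {V : Finset (Fin n)} {f : Fin n → Fin n} :
    f ∈ goodF i V ↔ (∀ v, v ∉ V → f v = v) ∧ goodOn i V f := by
  classical
  rw [goodF]
  rw [Finset.mem_filter]
  simp

lemma goodF_card (i : Fin n) (V : Finset (Fin n)) (hi : i ∉ V) :
    (goodF i V).card ≤ (V.card + 1) ^ (V.card - 1) := by
  classical
  set m := V.card with hm
  have hcard : (Fintype.piFinset (fun _ : Fin (m - 1) => insert i V)).card
      = (m + 1) ^ (m - 1) := by
    rw [Fintype.card_piFinset]
    simp [Finset.card_insert_of_notMem hi, hm]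
  rw [← hcard]
  apply Finset.card_le_card_of_injOn
    (fun f => fun j : Fin (m - 1) => (encodeAux m V f).getD j i)
  · intro f hf
    obtain ⟨hout, hgood⟩ := mem_goodF.1 hf
    simp only [Finset.mem_coe, Fintype.mem_piFinset]
    intro j
    rcases lt_or_ge (j : ℕ) (encodeAux m V f).length with hj | hj
    · rw [List.getD_eq_getElem _ _ hj]
      obtain ⟨w, hw, hfw⟩ := encodeAux_mem m V f hi hgood rfl _ (List.getElem_mem hj)
      rcases Finset.mem_insert.1 (hgood w hw).1 with h | h
      · rw [← hfw, h]; exact Finset.mem_insert_self i V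
      · rw [← hfw]; exact Finset.mem_insert_of_mem h
    · rw [List.getD_eq_default _ _ hj]
      exact Finset.mem_insert_self i V
  · intro f hf g hg heq
    obtain ⟨hfout, hfgood⟩ := mem_goodF.1 hf
    obtain ⟨hgout, hggood⟩ := mem_goodF.1 hg
    have hlenf : (encodeAux m V f).length = m := encodeAux_length m V f hi hfgood rfl
    have hleng : (encodeAux m V g).length = m := encodeAux_length m V g hi hggood rfl
    have hlists : encodeAux m V f = encodeAux m V g := by
      apply List.ext_getElem (by rw [hlenf, hleng])
      intro j hj1 hj2
      rcases lt_or_ge j (m - 1) with hjm | hjm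
      · have h := congrFun heq ⟨j, hjm⟩
        simp only at h
        rwa [List.getD_eq_getElem _ _ hj1, List.getD_eq_getElem _ _ hj2] at h
      · -- j = m - 1, last entry, both are i
        have hm1 : m ≠ 0 := by rw [hlenf] at hj1; omega
        have hj : j = m - 1 := by rw [hlenf] at hj1; omega
        have hlf := encodeAux_last m V f hi hfgood rfl
        have hlg := encodeAux_last m V g hi hggood rfl
        rw [if_neg hm1] at hlf hlg
        rw [List.getLast?_eq_getElem?] at hlf hlg
        rw [hlenf] at hlf; rw [hleng] at hlg
        rw [List.getElem?_eq_getElem (by omega)] at hlf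
        rw [List.getElem?_eq_getElem (by omega)] at hlg
        have hf' : (encodeAux m V f)[m-1]'(by omega) = i := Option.some.inj hlf
        have hg' : (encodeAux m V g)[m-1]'(by omega) = i := Option.some.inj hlg
        simp only [hj]
        rw [hf', hg']
    funext v
    by_cases hv : v ∈ V
    · exact encodeAux_inj m V f g hi hfgood hggood rfl hlists v hv
    · rw [hfout v hv, hgout v hv]

/-! ### Edge sets -/

def treeEdges (i : Fin n) (S : Finset (Fin n)) (f : Fin n → Fin n) : Finset (Sym2 (Fin n)) :=
  (S.erase i).image (fun v => s(v, f v))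

def crossEdges (S : Finset (Fin n)) : Finset (Sym2 (Fin n)) :=
  (S ×ˢ Sᶜ).image (fun q => s(q.1, q.2))

lemma crossEdges_card (S : Finset (Fin n)) : (crossEdges S).card = S.card * Sᶜ.card := by
  rw [crossEdges, Finset.card_image_of_injOn, Finset.card_product]
  rintro ⟨a, b⟩ hab ⟨c, d⟩ hcd h
  simp only [Finset.mem_coe, Finset.mem_product, Finset.mem_compl] at hab hcd
  simp only [Sym2.eq_iff] at h
  rcases h with ⟨h1, h2⟩ | ⟨h1, h2⟩
  · simp only [Prod.mk.injEq]; exact ⟨h1, h2⟩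
  · exact absurd (h1 ▸ hab.1) hcd.2

lemma mem_crossEdges {S : Finset (Fin n)} {e : Sym2 (Fin n)} :
    e ∈ crossEdges S ↔ ∃ a b, a ∈ S ∧ b ∉ S ∧ e = s(a, b) := by
  simp only [crossEdges, Finset.mem_image, Finset.mem_product, Finset.mem_compl, Prod.exists]
  constructor
  · rintro ⟨a, b, ⟨ha, hb⟩, rfl⟩; exact ⟨a, b, ha, hb, rfl⟩
  · rintro ⟨a, b, ha, hb, rfl⟩; exact ⟨a, b, ⟨ha, hb⟩, rfl⟩

lemma treeEdges_card {i : Fin n} {S : Finset (Fin n)} {f : Fin n → Fin n}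
    (hf : goodOn i (S.erase i) f) : (treeEdges i S f).card = (S.erase i).card := by
  rw [treeEdges, Finset.card_image_of_injOn]
  intro v hv w hw h
  simp only [Sym2.eq_iff] at h
  rcases h with ⟨h1, _⟩ | ⟨h1, h2⟩
  · exact h1
  · by_contra hne
    have hi : i ∉ S.erase i := Finset.notMem_erase i S
    have d1 := dOf_lt hf hi hw hv h2
    have d2 := dOf_lt hf hi hv hw h1.symm
    omega

lemma treeEdges_subset {i : Fin n} {S : Finset (Fin n)} {f : Fin n → Fin n} (hiS : i ∈ S)
    (hf : goodOn i (S.erase i) f) {e : Sym2 (Fin n)} (he : e ∈ treeEdges i S f) :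
    ∀ a ∈ e, a ∈ S := by
  obtain ⟨v, hv, rfl⟩ := Finset.mem_image.1 he
  intro a ha
  rcases Sym2.mem_iff.1 ha with rfl | rfl
  · exact Finset.mem_of_mem_erase hv
  · have := (hf v hv).1
    rwa [Finset.insert_erase hiS] at this

lemma tree_cross_disjoint {i : Fin n} {S : Finset (Fin n)} {f : Fin n → Fin n} (hiS : i ∈ S)
    (hf : goodOn i (S.erase i) f) : Disjoint (treeEdges i S f) (crossEdges S) := by
  rw [Finset.disjoint_left]
  intro e he hce
  obtain ⟨a, b, _, hb, rfl⟩ := mem_crossEdges.1 hce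
  exact hb (treeEdges_subset hiS hf he b (Sym2.mem_mk_right a b))

end Aux

lemma bern_true (p : ℝ) : bern p {true} = ENNReal.ofReal p := by
  simp [bern, Measure.dirac_apply, ENNReal.ofReal]

lemma bern_false (p : ℝ) : bern p {false} = ENNReal.ofReal (1 - p) := by
  simp [bern, Measure.dirac_apply, ENNReal.ofReal]

lemma bern_univ (p : ℝ) (hp0 : 0 ≤ p) (hp1 : p ≤ 1) : bern p Set.univ = 1 := by
  simp only [bern, Measure.add_apply, Measure.smul_apply, Measure.dirac_apply,
    Set.mem_univ, Set.indicator_of_mem, Pi.one_apply, ENNReal.smul_def, smul_eq_mul, mul_one]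
  rw [show ((p.toNNReal : ENNReal)) = ENNReal.ofReal p from rfl,
    show (((1-p).toNNReal : ENNReal)) = ENNReal.ofReal (1-p) from rfl,
    ← ENNReal.ofReal_add hp0 (by linarith)]
  norm_num

def cylEvent {n : ℕ} (A B : Finset (Sym2 (Fin n))) : Set (Sym2 (Fin n) → Bool) :=
  {ω | (∀ e ∈ A, ω e = true) ∧ ∀ e ∈ B, ω e = false}

lemma erMeasure_cylEvent {n : ℕ} {p : ℝ} (hp0 : 0 ≤ p) (hp1 : p ≤ 1)
    {A B : Finset (Sym2 (Fin n))} (hAB : Disjoint A B) :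
    erMeasure n p (cylEvent A B)
      = ENNReal.ofReal p ^ A.card * ENNReal.ofReal (1 - p) ^ B.card := by
  classical
  have hset : cylEvent A B = Set.pi Set.univ
      (fun e => if e ∈ A then {true} else if e ∈ B then ({false} : Set Bool) else Set.univ) := by
    ext ω
    simp only [cylEvent, Set.mem_setOf_eq, Set.mem_pi, Set.mem_univ, forall_true_left]
    constructor
    · rintro ⟨h1, h2⟩ e
      by_cases hA : e ∈ A
      · simp [hA, h1 e hA]
      · by_cases hB : e ∈ B
        · simp [hA, hB, h2 e hB]
        · simp [hA, hB]
    · intro h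
      constructor
      · intro e he
        have := h e
        rwa [if_pos he, Set.mem_singleton_iff] at this
      · intro e he
        have := h e
        rwa [if_neg (Finset.disjoint_right.1 hAB he), if_pos he, Set.mem_singleton_iff] at this
  rw [hset, erMeasure, Measure.pi_pi]
  have hb : ∀ e : Sym2 (Fin n),
      bern p (if e ∈ A then {true} else if e ∈ B then ({false} : Set Bool) else Set.univ)
        = if e ∈ A then ENNReal.ofReal p else if e ∈ B then ENNReal.ofReal (1 - p) else 1 := by
    intro e
    split_ifs with h1 h2
    · exact bern_true p
    · exact bern_false p
    · exact bern_univ p hp0 hp1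
  rw [Finset.prod_congr rfl (fun e _ => hb e)]
  rw [← Finset.prod_subset (Finset.subset_univ (A ∪ B))
    (fun e _ he => by
      rw [if_neg (fun h => he (Finset.mem_union_left _ h)),
        if_neg (fun h => he (Finset.mem_union_right _ h))])]
  rw [Finset.prod_union hAB]
  congr 1
  · rw [Finset.prod_congr rfl (fun e he => if_pos he), Finset.prod_const]
  · rw [Finset.prod_congr rfl (fun e he => by
      rw [if_neg (Finset.disjoint_right.1 hAB he), if_pos he]), Finset.prod_const]


lemma exists_parent {n : ℕ} {G : SimpleGraph (Fin n)} {i v : Fin n}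
    (h : G.Reachable i v) (hne : v ≠ i) :
    ∃ w, G.Adj w v ∧ G.Reachable i w ∧ G.dist i w < G.dist i v := by
  obtain ⟨p, hp⟩ := h.exists_walk_length_eq_dist
  cases p with
  | nil => exact absurd rfl hne
  | cons hadj q =>
    obtain ⟨x, q', h', hc⟩ := SimpleGraph.Walk.exists_cons_eq_concat hadj q
    refine ⟨x, h', ⟨q'⟩, ?_⟩
    have hlen : q'.length + 1 = G.dist i v := by
      rw [← hp, hc, SimpleGraph.Walk.length_concat]
    have := SimpleGraph.dist_le q'
    omega

open Classical in
noncomputable def parentFn (n : ℕ) (ω : Sym2 (Fin n) → Bool) (i : Fin n) : Fin n → Fin n :=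
  fun v => if h : (erGraph n ω).Reachable i v ∧ v ≠ i
    then Classical.choose (exists_parent h.1 h.2) else v

lemma parentFn_spec {n : ℕ} {ω : Sym2 (Fin n) → Bool} {i v : Fin n}
    (h : (erGraph n ω).Reachable i v) (hne : v ≠ i) :
    (erGraph n ω).Adj (parentFn n ω i v) v ∧ (erGraph n ω).Reachable i (parentFn n ω i v) ∧
      (erGraph n ω).dist i (parentFn n ω i v) < (erGraph n ω).dist i v := by
  rw [parentFn, dif_pos ⟨h, hne⟩]
  exact Classical.choose_spec (exists_parent h hne)

lemma parentFn_iterate {n : ℕ} {ω : Sym2 (Fin n) → Bool} {i v : Fin n}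
    (h : (erGraph n ω).Reachable i v) : ∃ k, (parentFn n ω i)^[k] v = i := by
  have main : ∀ m, ∀ v, (erGraph n ω).Reachable i v → (erGraph n ω).dist i v ≤ m →
      ∃ k, (parentFn n ω i)^[k] v = i := by
    intro m
    induction m with
    | zero =>
      intro v hv hd
      refine ⟨0, ?_⟩
      by_contra hne
      have := hv.pos_dist_of_ne (fun h => hne (by simpa using h.symm))
      omega
    | succ m ih =>
      intro v hv hd
      by_cases hne : v = i
      · exact ⟨0, hne⟩
      · obtain ⟨hadj, hreach, hdist⟩ := parentFn_spec hv hne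
        obtain ⟨k, hk⟩ := ih (parentFn n ω i v) hreach (by omega)
        exact ⟨k + 1, by rw [Function.iterate_succ_apply, hk]⟩
  exact main _ v h le_rfl

open Classical in
noncomputable def Sgood (n r : ℕ) (i : Fin n) : Finset (Finset (Fin n)) :=
  Finset.univ.filter (fun S => i ∈ S ∧ S.card = r)

lemma mem_Sgood {n r : ℕ} {i : Fin n} {S : Finset (Fin n)} :
    S ∈ Sgood n r i ↔ i ∈ S ∧ S.card = r := by
  classical
  rw [Sgood]
  rw [Finset.mem_filter]
  simp

lemma Sgood_card (n r : ℕ) (hr : 1 ≤ r) (i : Fin n) :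
    (Sgood n r i).card = (n - 1).choose (r - 1) := by
  classical
  have hb : (Sgood n r i).card = ((Finset.univ.erase i).powersetCard (r - 1)).card := by
    apply Finset.card_bij (fun S _ => S.erase i)
    · intro S hS
      obtain ⟨hiS, hcard⟩ := mem_Sgood.1 hS
      rw [Finset.mem_powersetCard]
      exact ⟨Finset.erase_subset_erase i (Finset.subset_univ S),
        by rw [Finset.card_erase_of_mem hiS, hcard]⟩
    · intro S hS T hT h
      obtain ⟨hiS, _⟩ := mem_Sgood.1 hS
      obtain ⟨hiT, _⟩ := mem_Sgood.1 hT
      rw [← Finset.insert_erase hiS, ← Finset.insert_erase hiT, h]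
    · intro T hT
      rw [Finset.mem_powersetCard] at hT
      obtain ⟨hsub, hcard⟩ := hT
      have hiT : i ∉ T := fun h => (Finset.notMem_erase i _) (hsub h)
      refine ⟨insert i T, mem_Sgood.2 ⟨Finset.mem_insert_self i T, ?_⟩, ?_⟩
      · rw [Finset.card_insert_of_notMem hiT, hcard]; omega
      · rw [Finset.erase_insert hiT]
  rw [hb, Finset.card_powersetCard, Finset.card_erase_of_mem (Finset.mem_univ i),
    Finset.card_univ, Fintype.card_fin]

lemma event_subset (n r : ℕ) (i : Fin n) :
    {ω : Sym2 (Fin n) → Bool | Nat.card {v : Fin n // (erGraph n ω).Reachable i v} = r}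
      ⊆ ⋃ S ∈ Sgood n r i, ⋃ f ∈ goodF i (S.erase i),
          cylEvent (treeEdges i S f) (crossEdges S) := by
  classical
  intro ω hω
  set G := erGraph n ω with hG
  set K : Set (Fin n) := {v | G.Reachable i v} with hK
  have hKfin : K.Finite := Set.toFinite K
  set S : Finset (Fin n) := hKfin.toFinset with hS
  have hmem : ∀ v, v ∈ S ↔ G.Reachable i v := fun v => by
    rw [hS, Set.Finite.mem_toFinset]; exact Iff.rfl
  have hcard : S.card = r := by
    have h1 : Nat.card {v : Fin n // G.Reachable i v} = r := hω
    have h2 : Nat.card K = K.ncard := Nat.card_coe_set_eq K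
    have h3 : K.ncard = S.card := Set.ncard_eq_toFinset_card K hKfin
    rw [← h3, ← h2]
    exact h1
  have hiS : i ∈ S := (hmem i).2 (SimpleGraph.Reachable.refl i)
  set f := parentFn n ω i with hf
  have hfout : ∀ v, v ∉ S.erase i → f v = v := by
    intro v hv
    rw [hf, parentFn, dif_neg]
    rintro ⟨h1, h2⟩
    exact hv (Finset.mem_erase.2 ⟨h2, (hmem v).2 h1⟩)
  have hfgood : goodOn i (S.erase i) f := by
    intro v hv
    obtain ⟨hvi, hvS⟩ := Finset.mem_erase.1 hv
    have hreach : G.Reachable i v := (hmem v).1 hvS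
    obtain ⟨hadj, hreach', _⟩ := parentFn_spec hreach hvi
    refine ⟨?_, parentFn_iterate hreach⟩
    rcases eq_or_ne (f v) i with h | h
    · rw [h]; exact Finset.mem_insert_self _ _
    · exact Finset.mem_insert_of_mem (Finset.mem_erase.2 ⟨h, (hmem _).2 hreach'⟩)
  refine Set.mem_iUnion₂.2 ⟨S, mem_Sgood.2 ⟨hiS, hcard⟩,
    Set.mem_iUnion₂.2 ⟨f, mem_goodF.2 ⟨hfout, hfgood⟩, ?_, ?_⟩⟩
  · intro e he
    obtain ⟨v, hv, rfl⟩ := Finset.mem_image.1 he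
    obtain ⟨hvi, hvS⟩ := Finset.mem_erase.1 hv
    obtain ⟨hadj, -, -⟩ := parentFn_spec ((hmem v).1 hvS) hvi
    rw [erGraph, SimpleGraph.fromEdgeSet_adj] at hadj
    have : ω s(f v, v) = true := hadj.1
    rwa [Sym2.eq_swap] at this
  · intro e he
    obtain ⟨a, b, ha, hb, rfl⟩ := mem_crossEdges.1 he
    by_contra hc
    have htrue : ω s(a, b) = true := by
      cases hh : ω s(a, b) with
      | false => exact absurd hh hc
      | true => rfl
    have hne : a ≠ b := fun h => hb (h ▸ ha)
    have hadj : G.Adj a b := by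
      rw [hG, erGraph, SimpleGraph.fromEdgeSet_adj]
      exact ⟨htrue, hne⟩
    exact hb ((hmem b).2 (((hmem a).1 ha).trans hadj.reachable))

/-- The probability that the component of vertex `i` in `G(n,p)` has exactly `r`
vertices is at most `C(n-1,r-1) r^(r-2) p^(r-1) (1-p)^(r(n-r))`. -/
theorem component_size_prob (n r : ℕ) (hr : 1 ≤ r) (hrn : r ≤ n) (p : ℝ)
    (hp0 : 0 ≤ p) (hp1 : p ≤ 1) (i : Fin n) :
    erMeasure n p {ω | Nat.card {v : Fin n // (erGraph n ω).Reachable i v} = r}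
      ≤ ENNReal.ofReal (((n - 1).choose (r - 1) : ℝ) * (r : ℝ) ^ (r - 2)
          * p ^ (r - 1) * (1 - p) ^ (r * (n - r))) := by
  classical
  have hp1' : (0:ℝ) ≤ 1 - p := by linarith
  set b : ENNReal := ENNReal.ofReal p ^ (r - 1) * ENNReal.ofReal (1 - p) ^ (r * (n - r)) with hb
  have key : ∀ S ∈ Sgood n r i, ∀ f ∈ goodF i (S.erase i),
      erMeasure n p (cylEvent (treeEdges i S f) (crossEdges S)) = b := by
    intro S hS f hf
    obtain ⟨hiS, hcard⟩ := mem_Sgood.1 hS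
    obtain ⟨hfout, hfgood⟩ := mem_goodF.1 hf
    have h1 : (treeEdges i S f).card = r - 1 := by
      rw [treeEdges_card hfgood, Finset.card_erase_of_mem hiS, hcard]
    have h2 : (crossEdges S).card = r * (n - r) := by
      rw [crossEdges_card, hcard, Finset.card_compl, Fintype.card_fin, hcard]
    rw [erMeasure_cylEvent hp0 hp1 (tree_cross_disjoint hiS hfgood), h1, h2]
  calc erMeasure n p {ω | Nat.card {v : Fin n // (erGraph n ω).Reachable i v} = r}
      ≤ erMeasure n p (⋃ S ∈ Sgood n r i, ⋃ f ∈ goodF i (S.erase i),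
          cylEvent (treeEdges i S f) (crossEdges S)) := measure_mono (event_subset n r i)
    _ ≤ ∑ S ∈ Sgood n r i, erMeasure n p (⋃ f ∈ goodF i (S.erase i),
          cylEvent (treeEdges i S f) (crossEdges S)) := measure_biUnion_finset_le _ _
    _ ≤ ∑ S ∈ Sgood n r i, ∑ f ∈ goodF i (S.erase i),
          erMeasure n p (cylEvent (treeEdges i S f) (crossEdges S)) :=
        Finset.sum_le_sum (fun S _ => measure_biUnion_finset_le _ _)
    _ ≤ ∑ _S ∈ Sgood n r i, ((r ^ (r - 2) : ℕ) : ENNReal) * b := ?_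
    _ = ((Sgood n r i).card : ENNReal) * (((r ^ (r - 2) : ℕ) : ENNReal) * b) := by
        rw [Finset.sum_const, nsmul_eq_mul]
    _ = ENNReal.ofReal (((n - 1).choose (r - 1) : ℝ) * (r : ℝ) ^ (r - 2)
          * p ^ (r - 1) * (1 - p) ^ (r * (n - r))) := ?_
  · apply Finset.sum_le_sum
    intro S hS
    have hiS := (mem_Sgood.1 hS).1
    have hcard := (mem_Sgood.1 hS).2
    have hcardE : (S.erase i).card = r - 1 := by rw [Finset.card_erase_of_mem hiS, hcard]
    have hbound := goodF_card i (S.erase i) (Finset.notMem_erase i S)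
    rw [hcardE, show r - 1 + 1 = r by omega, show r - 1 - 1 = r - 2 by omega] at hbound
    calc ∑ f ∈ goodF i (S.erase i), erMeasure n p (cylEvent (treeEdges i S f) (crossEdges S))
        = ∑ _f ∈ goodF i (S.erase i), b := Finset.sum_congr rfl (fun f hf => key S hS f hf)
      _ = ((goodF i (S.erase i)).card : ENNReal) * b := by rw [Finset.sum_const, nsmul_eq_mul]
      _ ≤ ((r ^ (r - 2) : ℕ) : ENNReal) * b := by
          apply mul_le_mul_left
          exact_mod_cast Nat.cast_le.2 hbound
  · rw [Sgood_card n r hr i, hb]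
    rw [← ENNReal.ofReal_natCast ((n - 1).choose (r - 1)),
      ← ENNReal.ofReal_natCast (r ^ (r - 2)),
      ← ENNReal.ofReal_pow hp0, ← ENNReal.ofReal_pow hp1',
      ← ENNReal.ofReal_mul (by positivity),
      ← ENNReal.ofReal_mul (by positivity),
      ← ENNReal.ofReal_mul (by positivity)]
    congr 1
    push_cast
    ring
end

section
/- Let G be a connected graph on n ≥ 3 vertices with T ≥ 2 odd-degree vertices, such that every pair of vertices has a common neighbor. Pair up the odd vertices as (u_1,u_2),...,(u_{T-1},u_T) and toggle (add if absent, delete if present) the edge within each pair. The resulting graph is Eulerian, and hence N_edit(G) = T/2. -/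
lemma even_card_symmDiff_singleton {V : Type*} [Fintype V] (A : Set V) (w0 : V)
    (hA : Odd (Nat.card A)) : Even (Nat.card ↥(symmDiff A ({w0} : Set V))) := by
  classical
  rw [Nat.card_coe_set_eq] at hA ⊢
  by_cases h : w0 ∈ A
  · have hEq : symmDiff A ({w0} : Set V) = A \ {w0} := by
      rw [Set.symmDiff_def]
      have h2 : ({w0} : Set V) \ A = ∅ := by
        rw [Set.diff_eq_empty]; simpa using h
      rw [h2, Set.union_empty]
    rw [hEq, Set.ncard_diff_singleton_of_mem h]
    obtain ⟨k, hk⟩ := hA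
    exact ⟨k, by omega⟩
  · have hEq : symmDiff A ({w0} : Set V) = insert w0 A := by
      rw [Set.symmDiff_def]
      have h1 : A \ {w0} = A := by
        ext x
        simp only [Set.mem_diff, Set.mem_singleton_iff, and_iff_left_iff_imp]
        intro hx hxw; exact h (hxw ▸ hx)
      have h2 : ({w0} : Set V) \ A = {w0} := by
        ext x
        simp only [Set.mem_diff, Set.mem_singleton_iff, and_iff_left_iff_imp]
        intro hx; subst hx; exact h
      rw [h1, h2, Set.union_comm, Set.insert_eq]
    rw [hEq, Set.ncard_insert_of_notMem h A.toFinite]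
    obtain ⟨k, hk⟩ := hA
    exact ⟨k + 1, by omega⟩


/-- A graph is Eulerian iff it is connected, every vertex has even degree,
and it has at least one edge. -/
def IsEulerian {V : Type*} (G : SimpleGraph V) : Prop :=
  G.Connected ∧ (∀ v, Even (degN G v)) ∧ G.edgeSet.Nonempty

/-- The minimum number of single-edge edits (additions or deletions) needed to
transform `G` into `H`: the size of the symmetric difference of edge sets. -/
noncomputable def editCount {V : Type*} (G H : SimpleGraph V) : ℕ :=
  Nat.card ↥(symmDiff G.edgeSet H.edgeSet)

/-- Eulerian edit number: minimum number of single-edge additions/deletions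
needed to turn `G` into an Eulerian graph. -/
noncomputable def Nedit {V : Type*} (G : SimpleGraph V) : ℕ :=
  sInf {k | ∃ H : SimpleGraph V, IsEulerian H ∧ editCount G H = k}

/-- Eulerian extension number: minimum number of edge additions making `G` Eulerian. -/
noncomputable def Next {V : Type*} (G : SimpleGraph V) : ℕ :=
  sInf {k | ∃ H : SimpleGraph V, IsEulerian H ∧ G ≤ H ∧ Nat.card ↥(H.edgeSet \ G.edgeSet) = k}

/-- Eulerian reduction number: minimum number of edge deletions making `G` Eulerian
(with at least one edge remaining). -/
noncomputable def Nred {V : Type*} (G : SimpleGraph V) : ℕ :=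
  sInf {k | ∃ H : SimpleGraph V, IsEulerian H ∧ H ≤ G ∧ Nat.card ↥(G.edgeSet \ H.edgeSet) = k}

/-- For a connected graph on `n ≥ 3` vertices with `T ≥ 2` odd-degree vertices in
which every pair of vertices has a common neighbor, toggling the edge within each
pair of a perfect pairing `M` of the odd vertices yields an Eulerian graph, and
hence `N_edit(G) = T/2`. -/
theorem edit_number_exact {V : Type*} [Fintype V] (G : SimpleGraph V)
    (hn : 3 ≤ Fintype.card V) (hconn : G.Connected)
    (hT : 2 ≤ Nat.card {v : V // Odd (degN G v)})
    (hcn : ∀ u v : V, u ≠ v → ∃ z : V, z ≠ u ∧ z ≠ v ∧ G.Adj z u ∧ G.Adj z v)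
    (M : Set (Sym2 V))
    (hM1 : ∀ e ∈ M, ¬ e.IsDiag)
    (hM2 : ∀ e ∈ M, ∀ v ∈ e, Odd (degN G v))
    (hM3 : ∀ v : V, Odd (degN G v) → ∃! e, e ∈ M ∧ v ∈ e) :
    IsEulerian (SimpleGraph.fromEdgeSet (symmDiff G.edgeSet M)) ∧
      Nedit G = Nat.card {v : V // Odd (degN G v)} / 2 := by
  classical
  set T := Nat.card {v : V // Odd (degN G v)} with hTdef
  set S := symmDiff G.edgeSet M with hS
  set H := SimpleGraph.fromEdgeSet S with hH
  -- every element of S is non-diagonal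
  have hSd : ∀ e ∈ S, ¬ e.IsDiag := by
    intro e he
    rcases Set.mem_symmDiff.mp he with ⟨h1, _⟩ | ⟨h1, _⟩
    · exact G.not_isDiag_of_mem_edgeSet h1
    · exact hM1 e h1
  have hHE : H.edgeSet = S := by
    rw [hH, SimpleGraph.edgeSet_fromEdgeSet]
    ext e
    simp only [Set.mem_diff, Set.mem_setOf_eq, and_iff_left_iff_imp]
    exact fun he => hSd e he
  have hHadj : ∀ u v : V, H.Adj u v ↔ s(u, v) ∈ S := by
    intro u v
    rw [hH, SimpleGraph.fromEdgeSet_adj]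
    constructor
    · exact fun h => h.1
    · intro h
      refine ⟨h, fun huv => ?_⟩
      exact hSd _ h (by simp [huv])
  -- neighbor sets of H
  have hNbr : ∀ v : V, H.neighborSet v =
      symmDiff (G.neighborSet v) {w : V | s(v, w) ∈ M} := by
    intro v
    ext w
    have h1 : w ∈ H.neighborSet v ↔ s(v, w) ∈ S := hHadj v w
    rw [h1, hS, Set.mem_symmDiff, Set.mem_symmDiff]
    simp only [SimpleGraph.mem_neighborSet, Set.mem_setOf_eq, SimpleGraph.mem_edgeSet]
  -- all degrees of H are even
  have hdeg : ∀ v : V, Even (degN H v) := by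
    intro v
    have hdegH : degN H v = Nat.card ↥(symmDiff (G.neighborSet v) {w : V | s(v, w) ∈ M}) := by
      rw [degN, hNbr]
    by_cases hv : Odd (degN G v)
    · obtain ⟨e, ⟨heM, hve⟩, huniq⟩ := hM3 v hv
      set w0 := Sym2.Mem.other hve with hw0
      have hspec : s(v, w0) = e := Sym2.other_spec hve
      have hMv : {w : V | s(v, w) ∈ M} = ({w0} : Set V) := by
        ext w
        simp only [Set.mem_setOf_eq, Set.mem_singleton_iff]
        constructor
        · intro hw
          have h2 : s(v, w) = e := huniq s(v, w) ⟨hw, Sym2.mem_mk_left v w⟩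
          exact Sym2.congr_right.mp (h2.trans hspec.symm)
        · intro h; subst h; rw [hspec]; exact heM
      rw [hdegH, hMv]
      exact even_card_symmDiff_singleton _ _ hv
    · have hMv : {w : V | s(v, w) ∈ M} = (∅ : Set V) := by
        ext w
        simp only [Set.mem_setOf_eq, Set.mem_empty_iff_false, iff_false]
        intro hw
        exact hv (hM2 _ hw v (Sym2.mem_mk_left v w))
      have hdd : degN H v = degN G v := by
        rw [hdegH, hMv]
        have : symmDiff (G.neighborSet v) (∅ : Set V) = G.neighborSet v := symmDiff_bot _
        rw [this, degN]
      rw [hdd]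
      exact Nat.not_odd_iff_even.mp hv
  -- one-step reachability
  have hstep : ∀ a b : V, G.Adj a b → H.Reachable a b := by
    intro a b hab
    by_cases hm : s(a, b) ∈ M
    · obtain ⟨z, hza, hzb, h1, h2⟩ := hcn a b hab.ne
      have hkey : ∀ x : V, G.Adj z x → x ∈ s(a, b) → s(z, x) ∉ M := by
        intro x hx hxab hmem
        have hodd : Odd (degN G x) := hM2 _ hmem x (Sym2.mem_mk_right z x)
        obtain ⟨e, _, huniq⟩ := hM3 x hodd
        have e1 : s(z, x) = e := huniq _ ⟨hmem, Sym2.mem_mk_right z x⟩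
        have e2 : s(a, b) = e := huniq _ ⟨hm, hxab⟩
        have hz : z ∈ s(a, b) := by
          rw [e2, ← e1]; exact Sym2.mem_mk_left z x
        rcases Sym2.mem_iff.mp hz with h' | h'
        exacts [hza h', hzb h']
      have Hza : H.Adj z a := (hHadj z a).mpr
        (Set.mem_symmDiff.mpr (Or.inl ⟨(G.mem_edgeSet).mpr h1,
          hkey a h1 (Sym2.mem_mk_left a b)⟩))
      have Hzb : H.Adj z b := (hHadj z b).mpr
        (Set.mem_symmDiff.mpr (Or.inl ⟨(G.mem_edgeSet).mpr h2,
          hkey b h2 (Sym2.mem_mk_right a b)⟩))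
      exact (Hza.symm.reachable).trans Hzb.reachable
    · have : H.Adj a b := (hHadj a b).mpr
        (Set.mem_symmDiff.mpr (Or.inl ⟨(G.mem_edgeSet).mpr hab, hm⟩))
      exact this.reachable
  have hreach : ∀ u v : V, G.Reachable u v → H.Reachable u v := by
    intro u v h
    obtain ⟨p⟩ := h
    induction p with
    | nil => exact SimpleGraph.Reachable.refl _
    | cons h' p ih => exact (hstep _ _ h').trans ih
  have hNe : Nonempty V := Fintype.card_pos_iff.mp (by omega)
  haveI := hNe
  have hHconn : H.Connected := SimpleGraph.Connected.mk
    (fun u v => hreach u v (hconn.preconnected u v))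
  have hedge : H.edgeSet.Nonempty := by
    obtain ⟨u, v, huv⟩ := Fintype.exists_pair_of_one_lt_card (by omega : 1 < Fintype.card V)
    obtain ⟨p⟩ := hHconn.preconnected u v
    cases p with
    | nil => exact absurd rfl huv
    | cons h' p => exact ⟨_, (H.mem_edgeSet).mpr h'⟩
  have hEuler : IsEulerian H := ⟨hHconn, hdeg, hedge⟩
  -- counting: T = 2 * |M|
  have hMfin : M.Finite := Set.toFinite M
  set Mf := hMfin.toFinset with hMf
  set oddF := Finset.univ.filter (fun v : V => Odd (degN G v)) with hoddF
  have hToddF : T = oddF.card := by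
    rw [hTdef, Nat.card_eq_fintype_card, Fintype.card_subtype]
  set f : V → Sym2 V := fun v =>
    if h : Odd (degN G v) then (hM3 v h).choose else s(v, v) with hf
  have hfspec : ∀ v : V, Odd (degN G v) → f v ∈ M ∧ v ∈ f v := by
    intro v h
    simp only [hf, dif_pos h]
    exact (hM3 v h).choose_spec.1
  have hfuniq : ∀ v : V, Odd (degN G v) → ∀ e ∈ M, v ∈ e → e = f v := by
    intro v h e he hve
    simp only [hf, dif_pos h]
    exact (hM3 v h).choose_spec.2 e ⟨he, hve⟩
  have hcount : oddF.card = 2 * Mf.card := by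
    have hmaps : ∀ v ∈ oddF, f v ∈ Mf := by
      intro v hv
      rw [hoddF, Finset.mem_filter] at hv
      rw [hMf, Set.Finite.mem_toFinset]
      exact (hfspec v hv.2).1
    have hfib2 : ∀ e ∈ Mf, (oddF.filter fun v => f v = e).card = 2 := by
      intro e he
      have heM : e ∈ M := (Set.Finite.mem_toFinset hMfin).mp he
      clear he
      revert heM
      induction e using Sym2.ind with
      | _ a b =>
        intro heM
        have hab : a ≠ b := fun h => hM1 _ heM (by simp [h])
        have hfib : (oddF.filter fun v => f v = s(a, b)) = {a, b} := by
          ext v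
          simp only [Finset.mem_filter, hoddF, Finset.mem_univ, true_and,
            Finset.mem_insert, Finset.mem_singleton]
          constructor
          · rintro ⟨hv, hfv⟩
            have hmem : v ∈ f v := (hfspec v hv).2
            rw [hfv] at hmem
            exact Sym2.mem_iff.mp hmem
          · rintro (rfl | rfl)
            · have hodd : Odd (degN G v) := hM2 _ heM v (Sym2.mem_mk_left _ _)
              exact ⟨hodd, (hfuniq v hodd _ heM (Sym2.mem_mk_left _ _)).symm⟩
            · have hodd : Odd (degN G v) := hM2 _ heM v (Sym2.mem_mk_right _ _)
              exact ⟨hodd, (hfuniq v hodd _ heM (Sym2.mem_mk_right _ _)).symm⟩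
        rw [hfib, Finset.card_insert_of_notMem (by simp [hab]), Finset.card_singleton]
    rw [Finset.card_eq_sum_card_fiberwise hmaps, Finset.sum_congr rfl hfib2,
      Finset.sum_const, smul_eq_mul, mul_comm]
  have heditH : editCount G H = Mf.card := by
    rw [editCount, hHE, hS, symmDiff_symmDiff_cancel_left, Nat.card_coe_set_eq,
      Set.ncard_eq_toFinset_card M hMfin]
  -- lower bound
  have hlow : ∀ H' : SimpleGraph V, IsEulerian H' → T / 2 ≤ editCount G H' := by
    intro H' hE
    set D := symmDiff G.edgeSet H'.edgeSet with hD
    have hDfin : D.Finite := Set.toFinite D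
    have hex : ∀ v : V, Odd (degN G v) → ∃ e ∈ D, v ∈ e := by
      intro v hv
      by_contra hcon
      push_neg at hcon
      have hns : G.neighborSet v = H'.neighborSet v := by
        ext w
        have hnd : s(v, w) ∉ D := fun h => hcon _ h (Sym2.mem_mk_left v w)
        rw [hD, Set.mem_symmDiff] at hnd
        simp only [SimpleGraph.mem_neighborSet, ← SimpleGraph.mem_edgeSet]
        tauto
      have : degN G v = degN H' v := by rw [degN, degN, hns]
      rw [this] at hv
      exact (Nat.not_odd_iff_even.mpr (hE.2.1 v)) hv
    set g : V → Sym2 V := fun v =>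
      if h : Odd (degN G v) then (hex v h).choose else s(v, v) with hg
    have hgspec : ∀ v : V, Odd (degN G v) → g v ∈ D ∧ v ∈ g v := by
      intro v h
      simp only [hg, dif_pos h]
      obtain ⟨he, hve⟩ := (hex v h).choose_spec
      exact ⟨he, hve⟩
    have hbound : oddF.card ≤ 2 * (oddF.image g).card := by
      apply Finset.card_le_mul_card_image
      intro e he
      have : ∀ a b : V, (oddF.filter fun v => g v = s(a, b)).card ≤ 2 := by
        intro a b
        have hsub : (oddF.filter fun v => g v = s(a, b)) ⊆ {a, b} := by
          intro v hv
          rw [Finset.mem_filter] at hv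
          have hv1 : Odd (degN G v) := by
            rw [hoddF, Finset.mem_filter] at hv
            exact hv.1.2
          have hmem : v ∈ g v := (hgspec v hv1).2
          rw [hv.2] at hmem
          simpa using Sym2.mem_iff.mp hmem
        refine (Finset.card_le_card hsub).trans ?_
        exact (Finset.card_insert_le _ _).trans (by simp)
      induction e using Sym2.ind with
      | _ a b => exact this a b
    have himg : (oddF.image g) ⊆ hDfin.toFinset := by
      intro e he
      obtain ⟨v, hv, rfl⟩ := Finset.mem_image.mp he
      rw [hoddF, Finset.mem_filter] at hv
      rw [Set.Finite.mem_toFinset]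
      exact (hgspec v hv.2).1
    have hDcard : editCount G H' = hDfin.toFinset.card := by
      rw [editCount, ← hD, Nat.card_coe_set_eq, Set.ncard_eq_toFinset_card D hDfin]
    have : T ≤ 2 * hDfin.toFinset.card := by
      calc T = oddF.card := hToddF
        _ ≤ 2 * (oddF.image g).card := hbound
        _ ≤ 2 * hDfin.toFinset.card := by
            exact Nat.mul_le_mul_left 2 (Finset.card_le_card himg)
    omega
  refine ⟨hEuler, ?_⟩
  have hmem : T / 2 ∈ {k | ∃ H' : SimpleGraph V, IsEulerian H' ∧ editCount G H' = k} :=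
    ⟨H, hEuler, by rw [heditH]; omega⟩
  rw [Nedit]
  refine le_antisymm (Nat.sInf_le hmem) ?_
  refine le_csInf ⟨_, hmem⟩ ?_
  rintro k ⟨H', hE, rfl⟩
  exact hlow H' hE
end
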